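/- Every set S ⊆ ℝⁿ of the form S = ⋃_{i=1}^k proj_x(T_i), where T₁,…,T_k ⊆ ℝ^(n+p) are nonempty closed convex sets, is bounded MICP representable: there exists a closed convex set M in a higher-dimensional space and finitely many feasible integer assignments such that S is the projection of the mixed-integer points of M. -/

import Mathlib

def IsIntegerVec {d : ℕ} (z : Fin d → ℝ) : Prop := ∀ i, ∃ m : ℤ, z i = (m : ℝ)

section Cone
variable {n p : ℕ}

/-- closed conic hull of `T × {1}` -/
def coneLift (T : Set ((Fin n → ℝ) × (Fin p → ℝ))) :
    Set ((Fin n → ℝ) × (Fin p → ℝ) × ℝ) :=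
  closure {w | 0 < w.2.2 ∧ w.2.2⁻¹ • (w.1, w.2.1) ∈ T}

lemma coneLift_closed (T : Set ((Fin n → ℝ) × (Fin p → ℝ))) : IsClosed (coneLift T) :=
  isClosed_closure

lemma coneLift_convex (T : Set ((Fin n → ℝ) × (Fin p → ℝ))) (h : Convex ℝ T) :
    Convex ℝ (coneLift T) := by
  apply Convex.closure
  rintro ⟨u1, v1, t1⟩ ⟨ht1, hm1⟩ ⟨u2, v2, t2⟩ ⟨ht2, hm2⟩ a b ha hb hab
  simp only at ht1 hm1 ht2 hm2
  have ht : 0 < a * t1 + b * t2 := by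
    calc (0:ℝ) < min t1 t2 := lt_min ht1 ht2
      _ = a * min t1 t2 + b * min t1 t2 := by rw [← add_mul, hab, one_mul]
      _ ≤ a * t1 + b * t2 :=
        add_le_add (mul_le_mul_of_nonneg_left (min_le_left _ _) ha)
          (mul_le_mul_of_nonneg_left (min_le_right _ _) hb)
  refine ⟨ht, ?_⟩
  have hc1 : (0:ℝ) ≤ a * t1 / (a * t1 + b * t2) := by positivity
  have hc2 : (0:ℝ) ≤ b * t2 / (a * t1 + b * t2) := by positivity
  have hcs : a * t1 / (a * t1 + b * t2) + b * t2 / (a * t1 + b * t2) = 1 := by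
    field_simp
  have := h hm1 hm2 hc1 hc2 hcs
  convert this using 1
  show (a * t1 + b * t2)⁻¹ • ((a • (u1,v1,t1) + b • (u2,v2,t2)).1,
      (a • (u1,v1,t1) + b • (u2,v2,t2)).2.1) = _
  simp only [Prod.smul_fst, Prod.smul_snd, Prod.fst_add, Prod.snd_add, Prod.smul_mk, Prod.mk_add_mk]
  ext c <;>
  · simp only [Prod.smul_fst, Prod.smul_snd, Prod.fst_add, Prod.snd_add,
      Pi.add_apply, Pi.smul_apply, smul_eq_mul]
    field_simp

lemma coneLift_one (T : Set ((Fin n → ℝ) × (Fin p → ℝ))) (hcl : IsClosed T)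
    (u : Fin n → ℝ) (v : Fin p → ℝ) : (u, v, (1:ℝ)) ∈ coneLift T ↔ (u, v) ∈ T := by
  constructor
  · intro h
    obtain ⟨f, hf, hlim⟩ := mem_closure_iff_seq_limit.1 h
    have hz : Filter.Tendsto (fun m => (f m).2.2) Filter.atTop (nhds (1:ℝ)) := by
      have hcont : Continuous (fun w : (Fin n → ℝ) × (Fin p → ℝ) × ℝ => w.2.2) := by fun_prop
      exact (hcont.tendsto _).comp hlim
    have hxy : Filter.Tendsto (fun m => ((f m).2.2)⁻¹ • ((f m).1, (f m).2.1))
        Filter.atTop (nhds ((1:ℝ)⁻¹ • (u, v))) := by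
      apply Filter.Tendsto.smul (hz.inv₀ one_ne_zero)
      have hcont : Continuous (fun w : (Fin n → ℝ) × (Fin p → ℝ) × ℝ => (w.1, w.2.1)) := by
        fun_prop
      exact (hcont.tendsto _).comp hlim
    have := hcl.mem_of_tendsto hxy (Filter.Eventually.of_forall fun m => (hf m).2)
    simpa using this
  · intro h
    apply subset_closure
    exact ⟨one_pos, by simpa using h⟩

lemma coneLift_zero (T : Set ((Fin n → ℝ) × (Fin p → ℝ))) (hne : T.Nonempty) :
    ((0 : Fin n → ℝ), (0 : Fin p → ℝ), (0:ℝ)) ∈ coneLift T := by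
  obtain ⟨⟨a, b⟩, hab⟩ := hne
  apply mem_closure_iff_seq_limit.2
  refine ⟨fun m => ((m+1:ℝ)⁻¹ • a, (m+1:ℝ)⁻¹ • b, (m+1:ℝ)⁻¹), fun m => ⟨by positivity, ?_⟩, ?_⟩
  · have h1 : ((m:ℝ)+1) ≠ 0 := by positivity
    simp only [inv_inv, Prod.smul_mk, smul_smul, mul_inv_cancel₀ h1, one_smul]
    exact hab
  · have h0 : Filter.Tendsto (fun m : ℕ => ((m:ℝ)+1)⁻¹) Filter.atTop (nhds 0) := by
      simpa using tendsto_one_div_add_atTop_nhds_zero_nat (𝕜 := ℝ)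
    refine Filter.Tendsto.prodMk_nhds ?_ (Filter.Tendsto.prodMk_nhds ?_ h0)
    · simpa using h0.smul_const a
    · simpa using h0.smul_const b

end Cone

lemma soc_combo (u1 u2 s1 s2 t1 t2 a b : ℝ) (h1 : u1^2 ≤ s1*t1) (h2 : u2^2 ≤ s2*t2)
    (hs1 : 0 ≤ s1) (hs2 : 0 ≤ s2) (ht1 : 0 ≤ t1) (ht2 : 0 ≤ t2) (ha : 0 ≤ a) (hb : 0 ≤ b) :
    (a*u1+b*u2)^2 ≤ (a*s1+b*s2)*(a*t1+b*t2) := by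
  have key : 2*(u1*u2) ≤ s1*t2 + s2*t1 := by
    rcases eq_or_lt_of_le ht1 with rfl | ht1'
    · have hu1 : u1 = 0 := by nlinarith [sq_nonneg u1]
      rw [hu1]
      nlinarith [mul_nonneg hs1 ht2]
    rcases eq_or_lt_of_le ht2 with rfl | ht2'
    · have hu2 : u2 = 0 := by nlinarith [sq_nonneg u2]
      rw [hu2]
      nlinarith [mul_nonneg hs2 ht1]
    nlinarith [sq_nonneg (u1*t2 - u2*t1), mul_pos ht1' ht2',
      mul_le_mul_of_nonneg_right h1 (sq_nonneg t2), mul_le_mul_of_nonneg_right h2 (sq_nonneg t1)]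
  nlinarith [mul_le_mul_of_nonneg_left h1 (sq_nonneg a), mul_le_mul_of_nonneg_left h2 (sq_nonneg b),
    mul_le_mul_of_nonneg_left key (mul_nonneg ha hb)]

section Big
variable {n p k : ℕ}

def blockIdx (n p k : ℕ) : Fin k × (Fin n ⊕ (Fin p ⊕ Fin n)) ≃ Fin (k * (n + (p + n))) :=
  (Equiv.prodCongr (Equiv.refl (Fin k))
    ((Equiv.sumCongr (Equiv.refl (Fin n)) finSumFinEquiv).trans finSumFinEquiv)).trans
    finProdFinEquiv

def Xp (y : Fin (k * (n + (p + n))) → ℝ) (i : Fin k) (c : Fin n) : ℝ :=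
  y (blockIdx n p k (i, Sum.inl c))
def Yp (y : Fin (k * (n + (p + n))) → ℝ) (i : Fin k) (c : Fin p) : ℝ :=
  y (blockIdx n p k (i, Sum.inr (Sum.inl c)))
def Tp (y : Fin (k * (n + (p + n))) → ℝ) (i : Fin k) (c : Fin n) : ℝ :=
  y (blockIdx n p k (i, Sum.inr (Sum.inr c)))

def bigM (T : Fin k → Set ((Fin n → ℝ) × (Fin p → ℝ))) :
    Set ((Fin n → ℝ) × (Fin (k * (n + (p + n))) → ℝ) × (Fin k → ℝ)) :=
  {w | (∀ i, 0 ≤ w.2.2 i) ∧ (∑ i, w.2.2 i) = 1 ∧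
      (∀ c, w.1 c = ∑ i, Xp w.2.1 i c) ∧
      (∀ i, ((fun c => Xp w.2.1 i c), (fun c => Yp w.2.1 i c), w.2.2 i) ∈ coneLift (T i)) ∧
      (∀ i c, (Xp w.2.1 i c)^2 ≤ w.2.2 i * Tp w.2.1 i c) ∧
      (∀ i c, 0 ≤ Tp w.2.1 i c)}

lemma bigM_closed (T : Fin k → Set ((Fin n → ℝ) × (Fin p → ℝ))) : IsClosed (bigM T) := by
  unfold bigM Xp Yp Tp
  simp only [Set.setOf_and]
  refine IsClosed.inter ?_ (IsClosed.inter ?_ (IsClosed.inter ?_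
    (IsClosed.inter ?_ (IsClosed.inter ?_ ?_))))
  · rw [Set.setOf_forall]
    exact isClosed_iInter fun i => isClosed_le continuous_const (by fun_prop)
  · exact isClosed_eq (continuous_finset_sum _ fun i _ => by fun_prop) continuous_const
  · rw [Set.setOf_forall]
    exact isClosed_iInter fun c =>
      isClosed_eq (by fun_prop) (continuous_finset_sum _ fun i _ => by fun_prop)
  · rw [Set.setOf_forall]
    exact isClosed_iInter fun i => IsClosed.preimage (by fun_prop) (coneLift_closed _)
  · rw [Set.setOf_forall]
    refine isClosed_iInter fun i => ?_
    rw [Set.setOf_forall]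
    exact isClosed_iInter fun c => isClosed_le (by fun_prop) (by fun_prop)
  · rw [Set.setOf_forall]
    refine isClosed_iInter fun i => ?_
    rw [Set.setOf_forall]
    exact isClosed_iInter fun c => isClosed_le continuous_const (by fun_prop)

lemma bigM_convex (T : Fin k → Set ((Fin n → ℝ) × (Fin p → ℝ)))
    (hconv : ∀ i, Convex ℝ (T i)) : Convex ℝ (bigM T) := by
  intro w1 h1 w2 h2 a b ha hb hab
  obtain ⟨hz1, hs1, hx1, hc1, hq1, ht1⟩ := h1
  obtain ⟨hz2, hs2, hx2, hc2, hq2, ht2⟩ := h2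
  have ez : ∀ i, (a • w1 + b • w2).2.2 i = a * w1.2.2 i + b * w2.2.2 i := fun i => rfl
  have eX : ∀ i c, Xp ((a • w1 + b • w2).2.1) i c = a * Xp w1.2.1 i c + b * Xp w2.2.1 i c :=
    fun i c => rfl
  have eT : ∀ i c, Tp ((a • w1 + b • w2).2.1) i c = a * Tp w1.2.1 i c + b * Tp w2.2.1 i c :=
    fun i c => rfl
  refine ⟨fun i => ?_, ?_, fun c => ?_, fun i => ?_, fun i c => ?_, fun i c => ?_⟩
  · rw [ez]
    exact add_nonneg (mul_nonneg ha (hz1 i)) (mul_nonneg hb (hz2 i))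
  · simp only [ez]
    rw [Finset.sum_add_distrib, ← Finset.mul_sum, ← Finset.mul_sum, hs1, hs2, mul_one, mul_one,
      hab]
  · have e1 : (a • w1 + b • w2).1 c = a * w1.1 c + b * w2.1 c := rfl
    simp only [e1, eX, hx1 c, hx2 c, Finset.sum_add_distrib, Finset.mul_sum]
  · have := (coneLift_convex (T i) (hconv i)) (hc1 i) (hc2 i) ha hb hab
    exact this
  · rw [ez, eX, eT]
    exact soc_combo _ _ _ _ _ _ _ _ (hq1 i c) (hq2 i c) (hz1 i) (hz2 i) (ht1 i c) (ht2 i c) ha hb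
  · rw [eT]
    exact add_nonneg (mul_nonneg ha (ht1 i c)) (mul_nonneg hb (ht2 i c))

lemma unit_of_int (z : Fin k → ℝ) (hint : IsIntegerVec z) (hz0 : ∀ i, 0 ≤ z i)
    (hsum : ∑ i, z i = 1) : ∃ j, z j = 1 ∧ ∀ i, i ≠ j → z i = 0 := by
  have hposj : ∃ j, 0 < z j := by
    by_contra h
    push_neg at h
    have : ∑ i, z i ≤ 0 := Finset.sum_nonpos fun i _ => h i
    linarith
  obtain ⟨j, hj⟩ := hposj
  have hz1 : 1 ≤ z j := by
    obtain ⟨m, hm⟩ := hint j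
    rw [hm] at hj ⊢
    exact_mod_cast by exact_mod_cast (by exact_mod_cast hj : (0:ℤ) < m)
  have hrest : ∑ i ∈ Finset.univ.erase j, z i = 1 - z j := by
    have := Finset.sum_erase_add Finset.univ z (Finset.mem_univ j)
    linarith [hsum ▸ this]
  have hrest0 : (0:ℝ) ≤ ∑ i ∈ Finset.univ.erase j, z i :=
    Finset.sum_nonneg fun i _ => hz0 i
  have hzj : z j = 1 := le_antisymm (by linarith) hz1
  have hall : ∀ i ∈ Finset.univ.erase j, z i = 0 :=
    (Finset.sum_eq_zero_iff_of_nonneg fun i _ => hz0 i).1 (by rw [hrest, hzj]; ring)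
  exact ⟨j, hzj, fun i hi => hall i (Finset.mem_erase.2 ⟨hi, Finset.mem_univ i⟩)⟩

end Big

theorem stmt18 {n p k : ℕ} (T : Fin k → Set ((Fin n → ℝ) × (Fin p → ℝ)))
    (hne : ∀ i, (T i).Nonempty) (hcl : ∀ i, IsClosed (T i))
    (hconv : ∀ i, Convex ℝ (T i)) :
    ∃ (q d : ℕ) (M : Set ((Fin n → ℝ) × (Fin q → ℝ) × (Fin d → ℝ))),
      IsClosed M ∧ Convex ℝ M ∧
      (⋃ i, Prod.fst '' T i) =
        {x | ∃ (y : Fin q → ℝ) (z : Fin d → ℝ), IsIntegerVec z ∧ (x, y, z) ∈ M} ∧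
      {z : Fin d → ℝ | IsIntegerVec z ∧ ∃ x y, (x, y, z) ∈ M}.Finite := by
  refine ⟨k * (n + (p + n)), k, bigM T, bigM_closed T, bigM_convex T hconv, ?_, ?_⟩
  · ext x
    simp only [Set.mem_iUnion, Set.mem_image, Set.mem_setOf_eq]
    constructor
    · rintro ⟨j, ⟨⟨u, v⟩, hT, rfl⟩⟩
      set F : Fin k × (Fin n ⊕ (Fin p ⊕ Fin n)) → ℝ := fun q =>
        match q with
        | (i, Sum.inl c) => if i = j then u c else 0
        | (i, Sum.inr (Sum.inl c)) => if i = j then v c else 0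
        | (i, Sum.inr (Sum.inr c)) => if i = j then (u c)^2 else 0 with hF
      set y : Fin (k * (n + (p + n))) → ℝ := fun m => F ((blockIdx n p k).symm m) with hy
      have hX : ∀ i c, Xp y i c = if i = j then u c else 0 := by
        intro i c; simp [Xp, hy, Equiv.symm_apply_apply, hF]
      have hY : ∀ i c, Yp y i c = if i = j then v c else 0 := by
        intro i c; simp [Yp, hy, Equiv.symm_apply_apply, hF]
      have hTp : ∀ i c, Tp y i c = if i = j then (u c)^2 else 0 := by
        intro i c; simp [Tp, hy, Equiv.symm_apply_apply, hF]
      refine ⟨y, fun i => if i = j then 1 else 0,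
        fun i => ⟨if i = j then 1 else 0, by by_cases h : i = j <;> simp [h]⟩,
        fun i => ?_, ?_, fun c => ?_, fun i => ?_, fun i c => ?_, fun i c => ?_⟩
      · show (0:ℝ) ≤ if i = j then 1 else 0
        split_ifs <;> norm_num
      · show ∑ i, (if i = j then (1:ℝ) else 0) = 1
        simp [Finset.sum_ite_eq']
      · show u c = ∑ i, Xp y i c
        simp [hX, Finset.sum_ite_eq']
      · show ((fun c => Xp y i c), (fun c => Yp y i c), if i = j then (1:ℝ) else 0) ∈
          coneLift (T i)
        by_cases h : i = j
        · subst h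
          have e1 : (fun c => Xp y i c) = u := by funext c; simp [hX]
          have e2 : (fun c => Yp y i c) = v := by funext c; simp [hY]
          rw [e1, e2, if_pos rfl]
          exact (coneLift_one _ (hcl i) u v).2 hT
        · have e1 : (fun c => Xp y i c) = 0 := by funext c; simp [hX, h]
          have e2 : (fun c => Yp y i c) = 0 := by funext c; simp [hY, h]
          rw [e1, e2, if_neg h]
          exact coneLift_zero _ (hne i)
      · show (Xp y i c)^2 ≤ (if i = j then (1:ℝ) else 0) * Tp y i c
        rw [hX, hTp]
        split_ifs <;> norm_num
      · show (0:ℝ) ≤ Tp y i c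
        rw [hTp]
        split_ifs
        · positivity
        · exact le_refl 0
    · rintro ⟨y, z, hint, hz0, hsum, hxeq, hcone, hq, ht⟩
      dsimp only at hz0 hsum hxeq hcone hq ht
      obtain ⟨j, hzj, hzo⟩ := unit_of_int z hint hz0 hsum
      have hXo : ∀ i, i ≠ j → ∀ c, Xp y i c = 0 := by
        intro i hi c
        have := hq i c
        rw [hzo i hi, zero_mul] at this
        nlinarith [sq_nonneg (Xp y i c)]
      have hxj : x = fun c => Xp y j c := by
        funext c
        rw [hxeq c, Finset.sum_eq_single j (fun i _ hi => hXo i hi c) (by simp)]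
      refine ⟨j, ((fun c => Xp y j c), (fun c => Yp y j c)), ?_, ?_⟩
      · have := hcone j
        rw [hzj] at this
        exact (coneLift_one _ (hcl j) _ _).1 this
      · exact hxj.symm
  · refine Set.Finite.subset (Set.Finite.pi (fun i : Fin k =>
      ((Set.finite_singleton (1:ℝ)).insert 0))) ?_
    rintro z ⟨hint, x, y, hz0, hsum, -, -, -, -⟩
    dsimp only at hz0 hsum
    obtain ⟨j, hzj, hzo⟩ := unit_of_int z hint hz0 hsum
    intro i _
    by_cases h : i = j
    · subst h; rw [hzj]; exact Set.mem_insert_of_mem _ rfl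
    · rw [hzo i h]; exact Set.mem_insert _ _
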